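/- arXiv:2006.14086 — 3 statements merged into one kernel-verified Lean document; each statement's English description precedes it below -/
import Mathlib

section
/- Let B be an (n-k)×k real matrix with compact QR decomposition B = U_B R_B where U_B has orthonormal columns. Let A be a k×k skew-symmetric matrix, and let q(t) = exp(t·[[A, -Bᵀ],[B, 0]])·I_{n,k} where I_{n,k} is the first k columns of the n×n identity matrix. Define f(t) = (I - U_B U_Bᵀ)·J·q(t), where J = [0 | I_{n-k}] selects the last n-k rows. Then f(t) = 0 for all t. -/
open Matrix NormedSpace Nat

section AuxExp
variable {n : Type*} [Fintype n] [DecidableEq n]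
attribute [local instance] Matrix.linftyOpNormedRing Matrix.linftyOpNormedAlgebra

lemma mul_exp_of_mul_eq_zero (N X : Matrix n n ℝ) (h : N * X = 0) :
    N * NormedSpace.exp X = N := by
  rw [exp_eq_tsum ℝ]
  calc N * (∑' (i : ℕ), (i ! : ℝ)⁻¹ • X ^ i)
      = ∑' (i : ℕ), N * ((i ! : ℝ)⁻¹ • X ^ i) :=
        ((expSeries_summable' (𝕂 := ℝ) X).tsum_mul_left N).symm
    _ = ∑' (i : ℕ), (if i = 0 then N else 0) := by
        refine tsum_congr fun i => ?_
        cases i with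
        | zero => simp
        | succ j =>
            have h2 : N * X ^ (j + 1) = 0 := by
              rw [show j + 1 = 1 + j from Nat.add_comm j 1, pow_add, pow_one,
                ← Matrix.mul_assoc, h, Matrix.zero_mul]
            simp [mul_smul_comm, h2]
    _ = N := tsum_ite_eq (0 : ℕ) (fun _ => N)
end AuxExp

/-- with `B = U_B R_B` a compact QR decomposition, the function
`f(t) = (I - U_B U_Bᵀ) · J · q(t)` vanishes identically, where `q(t) = exp(tH)·I_{n,k}`
and `J` selects the last `n-k` rows.  Here the ambient index set `Fin k ⊕ Fin m`
plays the role of `{1,…,n}` with `m = n - k`. -/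
theorem flag_qr_projection_vanishes {k m : ℕ} (hk : 0 < k) (hkm : k < m)
    (A : Matrix (Fin k) (Fin k) ℝ) (hA : Aᵀ = -A)
    (B UB : Matrix (Fin m) (Fin k) ℝ) (RB : Matrix (Fin k) (Fin k) ℝ)
    (hQR : B = UB * RB) (hUB : UBᵀ * UB = 1)
    (hRtri : ∀ i j : Fin k, j < i → RB i j = 0)
    (H : Matrix (Fin k ⊕ Fin m) (Fin k ⊕ Fin m) ℝ)
    (hH : H = Matrix.fromBlocks A (-Bᵀ) B 0)
    (Ink : Matrix (Fin k ⊕ Fin m) (Fin k) ℝ)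
    (hInk : Ink = Matrix.of fun i j => if i = Sum.inl j then (1 : ℝ) else 0)
    (q : ℝ → Matrix (Fin k ⊕ Fin m) (Fin k) ℝ)
    (hq : ∀ t, q t = NormedSpace.exp (t • H) * Ink) :
    ∀ t : ℝ, (1 - UB * UBᵀ) * ((q t).submatrix Sum.inr id) = 0 := by
  intro t
  set P : Matrix (Fin m) (Fin m) ℝ := 1 - UB * UBᵀ with hP
  have hPB : P * B = 0 := by
    rw [hQR, hP, Matrix.sub_mul, Matrix.one_mul, Matrix.mul_assoc,
      ← Matrix.mul_assoc UBᵀ UB RB, hUB, Matrix.one_mul, sub_self]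
  set N : Matrix (Fin k ⊕ Fin m) (Fin k ⊕ Fin m) ℝ := Matrix.fromBlocks 0 0 0 P with hN
  have hNH : N * (t • H) = 0 := by
    rw [Matrix.mul_smul, hN, hH, Matrix.fromBlocks_multiply]
    simp [hPB]
  have key : N * NormedSpace.exp (t • H) = N := mul_exp_of_mul_eq_zero _ _ hNH
  have hNq : N * q t = N * Ink := by
    rw [hq, ← Matrix.mul_assoc, key]
  ext r j
  have h1 := congrFun (congrFun hNq (Sum.inr r)) j
  simp only [Matrix.mul_apply, Fintype.sum_sum_type, hN, hInk,
    Matrix.fromBlocks_apply₂₁, Matrix.fromBlocks_apply₂₂, Matrix.zero_apply,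
    zero_mul, Finset.sum_const_zero, zero_add, Matrix.of_apply, mul_ite, mul_one,
    mul_zero, Sum.inr.injEq, reduceCtorEq, if_false] at h1
  simpa [Matrix.mul_apply, Matrix.submatrix_apply] using h1
end

section
/- Let B be an (n-k)×k real matrix, A a k×k skew-symmetric matrix, H = [[A, -Bᵀ],[B, 0]] the corresponding n×n skew-symmetric block matrix, and q(t) = exp(tH)·I_{n,k}. Write q(1) = q in block form as q = [q_k; q_{n-k}] with q_k the first k rows and q_{n-k} the last n-k rows. If the column spans of q(0) = I_{n,k} and q(1) intersect trivially (i.e. q_{n-k} has rank k), then the column span of q_{n-k} equals the column span of B. -/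
open Matrix NormedSpace

/-- The column span of a matrix. -/
def colSpan {m' k' : Type*} [Fintype k'] (M : Matrix m' k' ℝ) : Submodule ℝ (m' → ℝ) :=
  LinearMap.range M.mulVecLin

/-- Lemma 1 of the paper: if the column spans of `q(0) = I_{n,k}` and
`q(1)` intersect trivially, then the span of the last `n-k` rows block `q_{n-k}` of
`q(1)` equals the column span of `B`. -/
theorem flag_lemma_same_span {k m : ℕ} (hk : 0 < k) (hkm : k < m)
    (A : Matrix (Fin k) (Fin k) ℝ) (hA : Aᵀ = -A)
    (B : Matrix (Fin m) (Fin k) ℝ)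
    (H : Matrix (Fin k ⊕ Fin m) (Fin k ⊕ Fin m) ℝ)
    (hH : H = Matrix.fromBlocks A (-Bᵀ) B 0)
    (Ink : Matrix (Fin k ⊕ Fin m) (Fin k) ℝ)
    (hInk : Ink = Matrix.of fun i j => if i = Sum.inl j then (1 : ℝ) else 0)
    (q : ℝ → Matrix (Fin k ⊕ Fin m) (Fin k) ℝ)
    (hq : ∀ t, q t = exp (t • H) * Ink)
    (hdisj : colSpan (q 0) ⊓ colSpan (q 1) = ⊥) :
    colSpan ((q 1).submatrix Sum.inr id) = colSpan B := by
  classical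
  -- basic computations about Ink
  have hInk_mulVec : ∀ (x : Fin k → ℝ) (i : Fin k ⊕ Fin m),
      (Ink *ᵥ x) i = Sum.elim x (fun _ => (0:ℝ)) i := by
    intro x i
    subst hInk
    cases i with
    | inl j => simp [Matrix.mulVec, dotProduct]
    | inr j => simp [Matrix.mulVec, dotProduct]
  -- q 1 = exp H * Ink and q 0 = Ink
  have hq1 : q 1 = exp H * Ink := by rw [hq 1, one_smul]
  have hq0 : q 0 = Ink := by rw [hq 0, zero_smul, exp_zero, Matrix.one_mul]
  -- Step 1: lower part of H *ᵥ w is in colSpan B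
  have hlow : ∀ w : (Fin k ⊕ Fin m) → ℝ,
      (fun i => (H *ᵥ w) (Sum.inr i)) ∈ colSpan B := by
    intro w
    refine ⟨fun j => w (Sum.inl j), ?_⟩
    ext i
    subst hH
    simp [Matrix.mulVecLin_apply, Matrix.mulVec, dotProduct, Fintype.sum_sum_type,
      Matrix.fromBlocks]
  -- Step 1': lower part of H^n *ᵥ (Ink *ᵥ x) is in colSpan B
  have hlowpow : ∀ (n : ℕ) (x : Fin k → ℝ),
      (fun i => ((H ^ n) *ᵥ (Ink *ᵥ x)) (Sum.inr i)) ∈ colSpan B := by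
    intro n x
    cases n with
    | zero =>
      have : (fun i => ((H ^ 0) *ᵥ (Ink *ᵥ x)) (Sum.inr i)) = 0 := by
        funext i
        simp [hInk_mulVec x]
      rw [this]; exact Submodule.zero_mem _
    | succ n =>
      have : (fun i => ((H ^ (n+1)) *ᵥ (Ink *ᵥ x)) (Sum.inr i))
          = fun i => (H *ᵥ ((H ^ n) *ᵥ (Ink *ᵥ x))) (Sum.inr i) := by
        funext i
        rw [pow_succ', ← Matrix.mulVec_mulVec]
      rw [this]; exact hlow _
  -- The continuous linear map M ↦ lower part of M *ᵥ (Ink *ᵥ x)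
  have key : ∀ x : Fin k → ℝ,
      (fun i => ((exp H) *ᵥ (Ink *ᵥ x)) (Sum.inr i)) ∈ colSpan B := by
    intro x
    set v := Ink *ᵥ x with hv
    let f₀ : Matrix (Fin k ⊕ Fin m) (Fin k ⊕ Fin m) ℝ →ₗ[ℝ] (Fin m → ℝ) :=
      { toFun := fun M => fun i => (M *ᵥ v) (Sum.inr i)
        map_add' := by intro M N; funext i; simp [Matrix.add_mulVec]
        map_smul' := by intro c M; funext i; simp [Matrix.smul_mulVec] }
    let f : Matrix (Fin k ⊕ Fin m) (Fin k ⊕ Fin m) ℝ →L[ℝ] (Fin m → ℝ) :=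
      f₀.toContinuousLinearMap
    letI : SeminormedRing (Matrix (Fin k ⊕ Fin m) (Fin k ⊕ Fin m) ℝ) :=
      Matrix.linftyOpSemiNormedRing
    letI : NormedRing (Matrix (Fin k ⊕ Fin m) (Fin k ⊕ Fin m) ℝ) :=
      Matrix.linftyOpNormedRing
    letI : NormedAlgebra ℝ (Matrix (Fin k ⊕ Fin m) (Fin k ⊕ Fin m) ℝ) :=
      Matrix.linftyOpNormedAlgebra
    have hsum : HasSum (fun n : ℕ => ((n.factorial : ℝ)⁻¹) • H ^ n) (exp H) :=
      exp_series_hasSum_exp' (𝕂 := ℝ) H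
    have hsum' : HasSum (fun n : ℕ => f (((n.factorial : ℝ)⁻¹) • H ^ n)) (f (exp H)) :=
      hsum.mapL f
    have hclosed : IsClosed ((colSpan B : Submodule ℝ (Fin m → ℝ)) : Set (Fin m → ℝ)) :=
      Submodule.closed_of_finiteDimensional _
    have hmem : f (exp H) ∈ colSpan B := by
      refine hclosed.mem_of_tendsto hsum' (Filter.Eventually.of_forall fun s => ?_)
      refine Submodule.sum_mem _ fun n _ => ?_
      have : f (((n.factorial : ℝ)⁻¹) • H ^ n) = ((n.factorial : ℝ)⁻¹) • f (H ^ n) := map_smul f _ _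
      rw [this]
      exact Submodule.smul_mem _ _ (hlowpow n x)
    exact hmem
  -- colSpan of lower block of q 1 ≤ colSpan B
  have hsub_eq : ∀ x : Fin k → ℝ,
      ((q 1).submatrix Sum.inr id) *ᵥ x = fun i => ((exp H) *ᵥ (Ink *ᵥ x)) (Sum.inr i) := by
    intro x
    funext i
    rw [hq1, Matrix.mulVec_mulVec]
    simp [Matrix.mulVec, Matrix.submatrix, dotProduct]
  have hle : colSpan ((q 1).submatrix Sum.inr id) ≤ colSpan B := by
    rintro _ ⟨x, rfl⟩
    rw [Matrix.mulVecLin_apply, hsub_eq x]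
    exact key x
  -- injectivity of the lower block
  have hinj : Function.Injective ((q 1).submatrix Sum.inr id).mulVecLin := by
    rw [← LinearMap.ker_eq_bot, LinearMap.ker_eq_bot']
    intro x hx
    rw [Matrix.mulVecLin_apply] at hx
    -- u := q 1 *ᵥ x lies in both colSpans
    have hu1 : (q 1) *ᵥ x ∈ colSpan (q 1) := ⟨x, rfl⟩
    have hu0 : (q 1) *ᵥ x ∈ colSpan (q 0) := by
      refine ⟨fun j => ((q 1) *ᵥ x) (Sum.inl j), ?_⟩
      rw [Matrix.mulVecLin_apply, hq0]
      funext i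
      rw [hInk_mulVec]
      cases i with
      | inl j => rfl
      | inr j =>
        have := congrFun hx j
        simp only [Matrix.mulVec, Matrix.submatrix, dotProduct] at this ⊢
        simpa using this.symm
    have hu : (q 1) *ᵥ x = 0 := by
      have : (q 1) *ᵥ x ∈ colSpan (q 0) ⊓ colSpan (q 1) := ⟨hu0, hu1⟩
      rwa [hdisj, Submodule.mem_bot] at this
    -- exp H invertible
    have hunit : IsUnit (exp H) := Matrix.isUnit_exp H
    have hInkx : Ink *ᵥ x = 0 := by
      have h1 : (exp H) *ᵥ (Ink *ᵥ x) = 0 := by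
        rw [Matrix.mulVec_mulVec, ← hq1, hu]
      have h2 : (exp H)⁻¹ *ᵥ ((exp H) *ᵥ (Ink *ᵥ x)) = Ink *ᵥ x := by
        rw [Matrix.mulVec_mulVec, Matrix.nonsing_inv_mul _ ((Matrix.isUnit_iff_isUnit_det _).mp hunit), Matrix.one_mulVec]
      rw [h1, Matrix.mulVec_zero] at h2
      exact h2.symm
    funext j
    have := congrFun hInkx (Sum.inl j)
    rw [hInk_mulVec] at this
    simpa using this
  -- finrank argument
  have h1 : Module.finrank ℝ (colSpan ((q 1).submatrix Sum.inr id)) = k := by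
    rw [colSpan, LinearMap.finrank_range_of_inj hinj]
    simp
  have h2 : Module.finrank ℝ (colSpan B) ≤ k := by
    have := LinearMap.finrank_range_le B.mulVecLin
    rw [Module.finrank_fin_fun] at this
    exact this
  exact Submodule.eq_of_le_of_finrank_le hle (le_trans h2 h1.ge)
end

section
/- Let H = [[A, -Bᵀ],[B, 0]] be an n×n skew-symmetric block matrix (A skew-symmetric k×k, B of size (n-k)×k) and q(t) = exp(tH)·I_{n,k}. If span{q(0)} ∩ span{q(1)} = {0}, then for all t ∈ [0,1], the column span of q(t) is contained in the column span of the n×2k matrix [q(0), q(1)]. -/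
open Matrix NormedSpace

lemma colSpan_mul_le {n' p' r' : Type*} [Fintype p'] [Fintype r']
    (X : Matrix n' p' ℝ) (Y : Matrix p' r' ℝ) : colSpan (X * Y) ≤ colSpan X := by
  rw [colSpan, colSpan, Matrix.mulVecLin_mul]
  exact LinearMap.range_comp_le_range _ _

lemma colSpan_fromColumns {m' n₁ n₂ : Type*} [Fintype n₁] [Fintype n₂]
    (X : Matrix m' n₁ ℝ) (Y : Matrix m' n₂ ℝ) :
    colSpan (Matrix.fromCols X Y) = colSpan X ⊔ colSpan Y := by
  apply le_antisymm
  · rintro x ⟨v, rfl⟩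
    rw [Matrix.mulVecLin_apply, ← Sum.elim_comp_inl_inr v, Matrix.fromCols_mulVec_sumElim]
    exact Submodule.add_mem_sup ⟨_, rfl⟩ ⟨_, rfl⟩
  · apply sup_le
    · rintro x ⟨v, rfl⟩
      exact ⟨Sum.elim v 0, by simp [Matrix.mulVecLin_apply]⟩
    · rintro x ⟨v, rfl⟩
      exact ⟨Sum.elim 0 v, by simp [Matrix.mulVecLin_apply]⟩

lemma exp_intertwine {n' p' : Type*} [Fintype n'] [DecidableEq n'] [Fintype p'] [DecidableEq p']
    (X : Matrix n' n' ℝ) (Y : Matrix p' p' ℝ) (C : Matrix n' p' ℝ)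
    (h : X * C = C * Y) : exp X * C = C * exp Y := by
  letI : SeminormedRing (Matrix n' n' ℝ) := Matrix.linftyOpSemiNormedRing
  letI : NormedRing (Matrix n' n' ℝ) := Matrix.linftyOpNormedRing
  letI : NormedAlgebra ℝ (Matrix n' n' ℝ) := Matrix.linftyOpNormedAlgebra
  letI : SeminormedRing (Matrix p' p' ℝ) := Matrix.linftyOpSemiNormedRing
  letI : NormedRing (Matrix p' p' ℝ) := Matrix.linftyOpNormedRing
  letI : NormedAlgebra ℝ (Matrix p' p' ℝ) := Matrix.linftyOpNormedAlgebra
  have hpow : ∀ i : ℕ, X ^ i * C = C * Y ^ i := by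
    intro i
    induction i with
    | zero => simp
    | succ i ih => rw [pow_succ', Matrix.mul_assoc, ih, ← Matrix.mul_assoc, h, Matrix.mul_assoc, ← pow_succ']
  let f : Matrix n' n' ℝ →ₗ[ℝ] Matrix n' p' ℝ :=
    { toFun := fun Z => Z * C
      map_add' := fun a b => Matrix.add_mul a b C
      map_smul' := fun r a => Matrix.smul_mul r a C }
  have hf : Continuous f := by
    show Continuous fun Z : Matrix n' n' ℝ => Z * C
    exact continuous_id.matrix_mul continuous_const
  let g : Matrix p' p' ℝ →ₗ[ℝ] Matrix n' p' ℝ :=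
    { toFun := fun Z => C * Z
      map_add' := fun a b => Matrix.mul_add C a b
      map_smul' := fun r a => Matrix.mul_smul C r a }
  have hg : Continuous g := by
    show Continuous fun Z : Matrix p' p' ℝ => C * Z
    exact continuous_const.matrix_mul continuous_id
  have h1 : (∑' n : ℕ, ((Nat.factorial n : ℝ))⁻¹ • X ^ n) * C
      = ∑' n : ℕ, (((Nat.factorial n : ℝ))⁻¹ • X ^ n) * C :=
    (((expSeries_summable' (𝕂 := ℝ) X).hasSum.map f.toAddMonoidHom hf).tsum_eq).symm
  have h2 : C * (∑' n : ℕ, ((Nat.factorial n : ℝ))⁻¹ • Y ^ n)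
      = ∑' n : ℕ, C * (((Nat.factorial n : ℝ))⁻¹ • Y ^ n) :=
    (((expSeries_summable' (𝕂 := ℝ) Y).hasSum.map g.toAddMonoidHom hg).tsum_eq).symm
  rw [exp_eq_tsum ℝ, exp_eq_tsum ℝ, h1, h2]
  congr 1
  funext n
  rw [Matrix.smul_mul, hpow, Matrix.mul_smul]

/-- Theorem 1, the 2k-embedding theorem: if the column spans of
`q(0)` and `q(1)` intersect trivially then for all `t ∈ [0,1]` the column span of
`q(t)` is contained in the column span of the `n×2k` matrix `[q(0), q(1)]`. -/
theorem flag_2k_embedding {k m : ℕ} (hk : 0 < k) (hkm : k < m)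
    (A : Matrix (Fin k) (Fin k) ℝ) (hA : Aᵀ = -A)
    (B : Matrix (Fin m) (Fin k) ℝ)
    (H : Matrix (Fin k ⊕ Fin m) (Fin k ⊕ Fin m) ℝ)
    (hH : H = Matrix.fromBlocks A (-Bᵀ) B 0)
    (Ink : Matrix (Fin k ⊕ Fin m) (Fin k) ℝ)
    (hInk : Ink = Matrix.of fun i j => if i = Sum.inl j then (1 : ℝ) else 0)
    (q : ℝ → Matrix (Fin k ⊕ Fin m) (Fin k) ℝ)
    (hq : ∀ t, q t = exp (t • H) * Ink)
    (hdisj : colSpan (q 0) ⊓ colSpan (q 1) = ⊥) :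
    ∀ t ∈ Set.Icc (0 : ℝ) 1,
      colSpan (q t) ≤ colSpan (Matrix.fromCols (q 0) (q 1)) := by
  -- rewrite Ink as a fromRows matrix
  have hInk' : Ink = Matrix.fromRows (1 : Matrix (Fin k) (Fin k) ℝ) (0 : Matrix (Fin m) (Fin k) ℝ) := by
    rw [hInk]
    ext (i | i) j <;> simp [Matrix.one_apply]
  have hHInk : H * Ink = Matrix.fromRows A B := by
    rw [hH, hInk', Matrix.fromBlocks_mul_fromRows]
    simp
  set C : Matrix (Fin k ⊕ Fin m) (Fin k ⊕ Fin k) ℝ := Matrix.fromCols Ink (H * Ink) with hC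
  set M : Matrix (Fin k ⊕ Fin k) (Fin k ⊕ Fin k) ℝ :=
    Matrix.fromBlocks 0 (-(Bᵀ * B)) 1 A with hM
  set E : Matrix (Fin k ⊕ Fin k) (Fin k) ℝ :=
    Matrix.fromRows (1 : Matrix (Fin k) (Fin k) ℝ) (0 : Matrix (Fin k) (Fin k) ℝ) with hE
  have key : H * (H * Ink) = Ink * (-(Bᵀ * B)) + (H * Ink) * A := by
    rw [hHInk, hInk', hH, Matrix.fromBlocks_mul_fromRows, Matrix.fromRows_mul,
      Matrix.fromRows_mul]
    ext (i | i) j <;> simp <;> ring_nf <;>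
      simp [Matrix.neg_mul, Matrix.mul_neg, add_comm]
  have hHC : H * C = C * M := by
    rw [hC, hM, Matrix.mul_fromCols, Matrix.fromCols_mul_fromBlocks, key]
    simp
  have hCE : C * E = Ink := by
    rw [hC, hE, Matrix.fromCols_mul_fromRows]
    simp
  have hqC : ∀ t : ℝ, q t = C * (exp (t • M) * E) := by
    intro t
    have h2 : (t • H) * C = C * (t • M) := by
      rw [Matrix.smul_mul, hHC, Matrix.mul_smul]
    rw [hq, ← hCE, ← Matrix.mul_assoc, exp_intertwine _ _ _ h2, Matrix.mul_assoc]
  have hq0 : q 0 = Ink := by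
    rw [hq]; simp
  -- injectivity facts
  have hInkinj : Function.Injective Ink.mulVecLin := by
    intro u v huv
    funext j
    have h := congrFun huv (Sum.inl j)
    simpa [hInk', Matrix.mulVecLin_apply, Matrix.fromRows_mulVec] using h
  have hexpinj : Function.Injective (exp H).mulVecLin := by
    have hcomm : Commute (-H) H := (Commute.refl H).neg_left
    have hexp : exp (-H) * exp H = 1 := by
      rw [← Matrix.exp_add_of_commute (-H) H hcomm, neg_add_cancel, exp_zero]
    intro u v huv
    have h := congrArg (fun w => exp (-H) *ᵥ w) huv
    simpa [Matrix.mulVecLin_apply, Matrix.mulVec_mulVec, hexp] using h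
  have hq1 : q 1 = exp H * Ink := by rw [hq]; simp
  have hq1inj : Function.Injective (q 1).mulVecLin := by
    rw [hq1, Matrix.mulVecLin_mul]
    exact hexpinj.comp hInkinj
  -- finrank computations
  have e0 : Module.finrank ℝ (colSpan (q 0)) = k := by
    rw [hq0, colSpan, LinearMap.finrank_range_of_inj hInkinj, Module.finrank_fin_fun]
  have e1 : Module.finrank ℝ (colSpan (q 1)) = k := by
    rw [colSpan, LinearMap.finrank_range_of_inj hq1inj, Module.finrank_fin_fun]
  have esup : Module.finrank ℝ ↥(colSpan (q 0) ⊔ colSpan (q 1)) = k + k := by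
    have h := Submodule.finrank_sup_add_finrank_inf_eq (colSpan (q 0)) (colSpan (q 1))
    rw [hdisj, finrank_bot, e0, e1] at h
    omega
  have hCle : Module.finrank ℝ (colSpan C) ≤ k + k := by
    have h := LinearMap.finrank_range_le C.mulVecLin
    rwa [Module.finrank_pi, Fintype.card_sum, Fintype.card_fin] at h
  -- the sup is contained in colSpan C
  have hle2 : colSpan (q 0) ⊔ colSpan (q 1) ≤ colSpan C := by
    apply sup_le
    · rw [hq0, ← hCE]; exact colSpan_mul_le _ _
    · rw [hqC 1]; exact colSpan_mul_le _ _
  have heq : colSpan (q 0) ⊔ colSpan (q 1) = colSpan C := by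
    apply Submodule.eq_of_le_of_finrank_le hle2
    rw [esup]; exact hCle
  intro t _
  rw [colSpan_fromColumns, heq, hqC t]
  exact colSpan_mul_le _ _
end
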